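/- Consider the boundary equation obtained by setting S₁ = 0 in the two-dimensional risky Black–Scholes (arithmetic-average basket) problem: ∂_tW − (σ₂²S₂²/2)∂_{S₂S₂}W − r_{R₂} S₂ ∂_{S₂}W + rW + f(W) = 0 on (0,T)×(0,∞), with initial condition W(0,S₂) = max{α(S₂/2 − K), 0}. Then the function W(t,S₂) := (1/2) 𝓑𝓢_{2K}(t,S₂) e^{−(λ_B(1−R_B)+λ_C(1−R_C)) t}, where 𝓑𝓢_{2K} is the Black–Scholes formula with strike 2K, volatility σ₂ and repo rate r_{R₂}, satisfies this equation at every (t,S₂) ∈ (0,T)×(0,∞) and satisfies lim_{t→0⁺} W(t,S₂) = max{α(S₂/2 − K), 0} for every S₂ > 0. -/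

import Mathlib

open MeasureTheory Real Filter Set Topology

/-- Standard normal cumulative distribution function. -/
noncomputable def Phi (x : ℝ) : ℝ :=
  (Real.sqrt (2 * Real.pi))⁻¹ * ∫ u in Set.Iic x, Real.exp (-u ^ 2 / 2)

noncomputable def phiD (x : ℝ) : ℝ :=
  (Real.sqrt (2 * Real.pi))⁻¹ * Real.exp (-x ^ 2 / 2)

lemma gauss_integrable : Integrable (fun u : ℝ => Real.exp (-u ^ 2 / 2)) := by
  have h := integrable_exp_neg_mul_sq (by norm_num : (0:ℝ) < 1/2)
  convert h using 2 with x
  ring_nf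

lemma gauss_mul_integrable : Integrable (fun u : ℝ => u * Real.exp (-u ^ 2 / 2)) := by
  have h := integrable_mul_exp_neg_mul_sq (by norm_num : (0:ℝ) < 1/2)
  convert h using 2 with x
  ring_nf

lemma gauss_tendsto_atTop : Tendsto (fun v : ℝ => Real.exp (-v ^ 2 / 2)) atTop (𝓝 0) := by
  have h1 : Tendsto (fun v : ℝ => v ^ 2 / 2) atTop atTop :=
    (tendsto_pow_atTop two_ne_zero).atTop_div_const (by norm_num)
  have h2 := Real.tendsto_exp_atBot.comp (tendsto_neg_atTop_atBot.comp h1)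
  simpa [Function.comp_def, neg_div] using h2

lemma gauss_tendsto_atBot : Tendsto (fun v : ℝ => Real.exp (-v ^ 2 / 2)) atBot (𝓝 0) := by
  have h := gauss_tendsto_atTop.comp tendsto_neg_atBot_atTop
  simpa [Function.comp_def, neg_sq] using h

lemma gauss_neg_mul_integrable : Integrable (fun u : ℝ => (-u) * Real.exp (-u ^ 2 / 2)) := by
  have h := gauss_mul_integrable.neg
  simpa [Pi.neg_def, neg_mul] using h

lemma phiD_pos (x : ℝ) : 0 < phiD x := by
  have h2 : 0 < Real.sqrt (2 * Real.pi) := Real.sqrt_pos.mpr (by positivity)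
  exact mul_pos (inv_pos.mpr h2) (Real.exp_pos _)

lemma hasDerivAt_Phi (x : ℝ) : HasDerivAt Phi (phiD x) x := by
  have hint : ∀ y : ℝ, (∫ u in Set.Iic y, Real.exp (-u ^ 2 / 2)) =
      (∫ u in Set.Iic (0:ℝ), Real.exp (-u ^ 2 / 2)) + ∫ u in (0:ℝ)..y, Real.exp (-u ^ 2 / 2) := by
    intro y
    have := intervalIntegral.integral_Iic_sub_Iic
      (f := fun u : ℝ => Real.exp (-u ^ 2 / 2)) (μ := volume) (a := (0:ℝ)) (b := y)
      gauss_integrable.integrableOn gauss_integrable.integrableOn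
    linarith
  have hd : HasDerivAt (fun y => ∫ u in (0:ℝ)..y, Real.exp (-u ^ 2 / 2))
      (Real.exp (-x ^ 2 / 2)) x :=
    intervalIntegral.integral_hasDerivAt_right
      gauss_integrable.intervalIntegrable
      gauss_integrable.aestronglyMeasurable.stronglyMeasurableAtFilter
      (by fun_prop)
  have h3 : HasDerivAt (fun y => (Real.sqrt (2 * Real.pi))⁻¹ *
      ((∫ u in Set.Iic (0:ℝ), Real.exp (-u ^ 2 / 2)) + ∫ u in (0:ℝ)..y, Real.exp (-u ^ 2 / 2)))
      (phiD x) x := by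
    simpa [phiD] using ((hd.const_add _).const_mul ((Real.sqrt (2 * Real.pi))⁻¹))
  exact h3.congr_of_eventuallyEq (by filter_upwards with y; rw [Phi, hint y])

lemma continuous_Phi : Continuous Phi := by
  have : Differentiable ℝ Phi := fun x => (hasDerivAt_Phi x).differentiableAt
  exact this.continuous

lemma Phi_nonneg (x : ℝ) : 0 ≤ Phi x := by
  apply mul_nonneg (by positivity)
  exact setIntegral_nonneg measurableSet_Iic (fun u _ => (Real.exp_pos _).le)

lemma integral_Iic_neg_mul_gauss (x : ℝ) :
    ∫ u in Set.Iic x, (-u) * Real.exp (-u ^ 2 / 2) = Real.exp (-x ^ 2 / 2) := by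
  have h := integral_Iic_of_hasDerivAt_of_tendsto
    (f := fun u : ℝ => Real.exp (-u ^ 2 / 2))
    (f' := fun u : ℝ => (-u) * Real.exp (-u ^ 2 / 2)) (a := x) (m := 0)
    ?_ ?_ ?_ ?_
  · rw [h, sub_zero]
  · exact (by fun_prop : Continuous fun u : ℝ => Real.exp (-u ^ 2 / 2)).continuousWithinAt
  · intro u _
    have h1 : HasDerivAt (fun u : ℝ => -u ^ 2 / 2) (-u) u := by
      have h2 : HasDerivAt (fun u : ℝ => u ^ 2) (2 * u) u := by
        simpa using (hasDerivAt_pow 2 u)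
      refine (h2.neg.div_const 2).congr_deriv (Eq.symm ?_); ring
    simpa [mul_comm] using h1.exp
  · exact gauss_neg_mul_integrable.integrableOn
  · exact gauss_tendsto_atBot
lemma mills (x : ℝ) (hx : x < 0) : (-x) * Phi x ≤ phiD x := by
  have h1 : (-x) * Phi x = (Real.sqrt (2 * Real.pi))⁻¹ *
      ∫ u in Set.Iic x, (-x) * Real.exp (-u ^ 2 / 2) := by
    rw [Phi, integral_const_mul]; ring
  rw [h1, phiD, ← integral_Iic_neg_mul_gauss x]
  apply mul_le_mul_of_nonneg_left _ (by positivity)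
  apply setIntegral_mono_on
  · exact (gauss_integrable.const_mul _).integrableOn
  · exact gauss_neg_mul_integrable.integrableOn
  · exact measurableSet_Iic
  · intro u hu
    have h2 : -x ≤ -u := by simp at hu ⊢; linarith [hu]
    exact mul_le_mul_of_nonneg_right h2 (Real.exp_pos _).le

lemma phiD_add_mul_Phi_nonneg (x : ℝ) : 0 ≤ phiD x + x * Phi x := by
  rcases le_or_gt 0 x with h | h
  · have h1 := Phi_nonneg x
    have h2 := (phiD_pos x).le
    positivity
  · have := mills x h
    linarith

lemma gauss_total : ∫ u : ℝ, Real.exp (-u ^ 2 / 2) = Real.sqrt (2 * Real.pi) := by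
  have h := integral_gaussian (1/2 : ℝ)
  have h2 : ∀ u : ℝ, -(1/2 : ℝ) * u ^ 2 = -u ^ 2 / 2 := fun u => by ring
  simp only [h2] at h
  rw [h]
  rw [show Real.pi / (1/2 : ℝ) = 2 * Real.pi by ring]

lemma Phi_symm (x : ℝ) : Phi (-x) = 1 - Phi x := by
  have h1 : (∫ u in Set.Iic (-x), Real.exp (-u ^ 2 / 2))
      = ∫ u in Set.Ioi x, Real.exp (-u ^ 2 / 2) := by
    rw [← integral_comp_neg_Ioi]
    simp [neg_sq]
  have h2 := intervalIntegral.integral_Iic_add_Ioi (b := x)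
    (f := fun u : ℝ => Real.exp (-u ^ 2 / 2)) (μ := volume)
    gauss_integrable.integrableOn gauss_integrable.integrableOn
  rw [gauss_total] at h2
  have h3 : Real.sqrt (2 * Real.pi) ≠ 0 := by positivity
  rw [Phi, Phi, h1]
  have h4 : (Real.sqrt (2 * Real.pi))⁻¹ * Real.sqrt (2 * Real.pi) = 1 := inv_mul_cancel₀ h3
  have h5 := congrArg (fun y => (Real.sqrt (2 * Real.pi))⁻¹ * y) h2
  simp only [mul_add] at h5
  linarith

lemma Phi_tendsto_atBot : Tendsto Phi atBot (𝓝 0) := by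
  have hub : Tendsto (fun x : ℝ => phiD x * (-x)⁻¹) atBot (𝓝 0) := by
    have h1 : Tendsto phiD atBot (𝓝 0) := by
      have h0 := gauss_tendsto_atBot.const_mul ((Real.sqrt (2 * Real.pi))⁻¹)
      rw [mul_zero] at h0
      exact h0
    have h2 : Tendsto (fun x : ℝ => (-x)⁻¹) atBot (𝓝 0) :=
      tendsto_inv_atTop_zero.comp tendsto_neg_atBot_atTop
    simpa using h1.mul h2
  refine tendsto_of_tendsto_of_tendsto_of_le_of_le' tendsto_const_nhds hub ?_ ?_
  · filter_upwards with x using Phi_nonneg x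
  · filter_upwards [eventually_lt_atBot (0:ℝ)] with x hx
    have hx' : (0:ℝ) < -x := by linarith
    have h2 : Phi x * (-x) ≤ phiD x := by rw [mul_comm]; exact mills x hx
    have h3 := (le_div_iff₀ hx').mpr h2
    rw [div_eq_mul_inv] at h3
    exact h3

lemma Phi_tendsto_atTop : Tendsto Phi atTop (𝓝 1) := by
  have h := Phi_tendsto_atBot.comp tendsto_neg_atTop_atBot
  have h2 : ∀ x : ℝ, Phi (-x) = 1 - Phi x := Phi_symm
  have h3 : Tendsto (fun x : ℝ => 1 - Phi x) atTop (𝓝 0) := by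
    refine h.congr fun x => ?_
    simp [Function.comp_def, Phi_symm x]
  have h4 := h3.const_sub 1
  simpa using h4

/-- `ζ₁ = (log(S/K) + (r_R + σ²/2)t)/(σ√t)`. -/
noncomputable def zeta1 (σ K r_R t S : ℝ) : ℝ :=
  (Real.log (S / K) + (r_R + σ ^ 2 / 2) * t) / (σ * Real.sqrt t)

/-- `ζ₂ = ζ₁ − σ√t`. -/
noncomputable def zeta2 (σ K r_R t S : ℝ) : ℝ :=
  zeta1 σ K r_R t S - σ * Real.sqrt t

/-- The Black–Scholes formula
`𝓑𝓢(t,S) = α S e^{−(r−r_R)t} Φ(αζ₁) − α K e^{−rt} Φ(αζ₂)` (t = time to maturity). -/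
noncomputable def BS (σ K r r_R α t S : ℝ) : ℝ :=
  α * S * Real.exp (-(r - r_R) * t) * Phi (α * zeta1 σ K r_R t S)
    - α * K * Real.exp (-r * t) * Phi (α * zeta2 σ K r_R t S)


lemma phiD_alpha {α : ℝ} (hα : α = 1 ∨ α = -1) (x : ℝ) : phiD (α * x) = phiD x := by
  rcases hα with rfl | rfl <;> simp [phiD] <;> ring_nf

lemma zeta_sq_diff (σ Kp rR t S : ℝ) (hσ : 0 < σ) (ht : 0 < t) :
    zeta1 σ Kp rR t S ^ 2 - zeta2 σ Kp rR t S ^ 2 = 2 * (Real.log (S / Kp) + rR * t) := by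
  have hst : 0 < Real.sqrt t := Real.sqrt_pos.mpr ht
  have hq : σ * Real.sqrt t ≠ 0 := by positivity
  have hsq : Real.sqrt t * Real.sqrt t = t := Real.mul_self_sqrt ht.le
  have h1 : zeta1 σ Kp rR t S * (σ * Real.sqrt t)
      = Real.log (S / Kp) + (rR + σ ^ 2 / 2) * t := by
    rw [zeta1, div_mul_cancel₀ _ hq]
  calc zeta1 σ Kp rR t S ^ 2 - zeta2 σ Kp rR t S ^ 2
      = 2 * (zeta1 σ Kp rR t S * (σ * Real.sqrt t)) - σ ^ 2 * (Real.sqrt t * Real.sqrt t) := by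
        rw [zeta2]; ring
    _ = 2 * (Real.log (S / Kp) + rR * t) := by rw [h1, hsq]; ring

lemma bs_identity (σ Kp r rR t S : ℝ) (hσ : 0 < σ) (ht : 0 < t) (hS : 0 < S) (hKp : 0 < Kp) :
    Kp * Real.exp (-r * t) * phiD (zeta2 σ Kp rR t S)
      = S * Real.exp (-(r - rR) * t) * phiD (zeta1 σ Kp rR t S) := by
  have h1 : zeta1 σ Kp rR t S ^ 2 = zeta2 σ Kp rR t S ^ 2
      + 2 * (Real.log (S / Kp) + rR * t) := by
    linarith [zeta_sq_diff σ Kp rR t S hσ ht]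
  have e2 : Real.exp (-zeta1 σ Kp rR t S ^ 2 / 2)
      = Real.exp (-zeta2 σ Kp rR t S ^ 2 / 2)
        * (Real.exp (Real.log (S / Kp) + rR * t))⁻¹ := by
    rw [← Real.exp_neg, ← Real.exp_add]
    congr 1
    rw [h1]; ring
  have e3 : Real.exp (Real.log (S / Kp) + rR * t) = S / Kp * Real.exp (rR * t) := by
    rw [Real.exp_add, Real.exp_log (div_pos hS hKp)]
  have e1 : Real.exp (-(r - rR) * t) = Real.exp (-r * t) * Real.exp (rR * t) := by
    rw [← Real.exp_add]; ring_nf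
  rw [phiD, phiD, e2, e3, e1]
  have h4 := Real.exp_ne_zero (rR * t)
  field_simp

lemma hasDerivAt_zeta1_S (σ Kp rR t S : ℝ) (hKp : 0 < Kp) (hS : 0 < S) :
    HasDerivAt (fun s => zeta1 σ Kp rR t s) (S⁻¹ / (σ * Real.sqrt t)) S := by
  have h1 : HasDerivAt (fun s : ℝ =>
      (Real.log s - Real.log Kp + (rR + σ ^ 2 / 2) * t) / (σ * Real.sqrt t))
      (S⁻¹ / (σ * Real.sqrt t)) S :=
    (((Real.hasDerivAt_log hS.ne').sub_const _).add_const _).div_const _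
  refine h1.congr_of_eventuallyEq ?_
  filter_upwards [eventually_gt_nhds hS] with s hs
  rw [zeta1, Real.log_div hs.ne' hKp.ne']

lemma hasDerivAt_zeta2_S (σ Kp rR t S : ℝ) (hKp : 0 < Kp) (hS : 0 < S) :
    HasDerivAt (fun s => zeta2 σ Kp rR t s) (S⁻¹ / (σ * Real.sqrt t)) S :=
  (hasDerivAt_zeta1_S σ Kp rR t S hKp hS).sub_const _

lemma hasDerivAt_BS_S (σ Kp r rR α t S : ℝ) (hα : α = 1 ∨ α = -1)
    (hσ : 0 < σ) (hKp : 0 < Kp) (ht : 0 < t) (hS : 0 < S) :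
    HasDerivAt (fun s => BS σ Kp r rR α t s)
      (α * Real.exp (-(r - rR) * t) * Phi (α * zeta1 σ Kp rR t S)) S := by
  have hst : 0 < Real.sqrt t := Real.sqrt_pos.mpr ht
  have hP1 : HasDerivAt (fun s => Phi (α * zeta1 σ Kp rR t s))
      (phiD (α * zeta1 σ Kp rR t S) * (α * (S⁻¹ / (σ * Real.sqrt t)))) S :=
    (hasDerivAt_Phi _).comp S ((hasDerivAt_zeta1_S σ Kp rR t S hKp hS).const_mul α)
  have hP2 : HasDerivAt (fun s => Phi (α * zeta2 σ Kp rR t s))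
      (phiD (α * zeta2 σ Kp rR t S) * (α * (S⁻¹ / (σ * Real.sqrt t)))) S :=
    (hasDerivAt_Phi _).comp S ((hasDerivAt_zeta2_S σ Kp rR t S hKp hS).const_mul α)
  have hf : HasDerivAt (fun s : ℝ => α * s * Real.exp (-(r - rR) * t))
      (α * Real.exp (-(r - rR) * t)) S := by
    simpa using ((hasDerivAt_id S).const_mul α).mul_const (Real.exp (-(r - rR) * t))
  have h1 := hf.mul hP1
  have h2 := hP2.const_mul (α * Kp * Real.exp (-r * t))
  have h3 := h1.sub h2
  refine h3.congr_deriv (Eq.symm ?_)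
  have hid := bs_identity σ Kp r rR t S hσ ht hS hKp
  have hid' : Kp * Real.exp (-(r * t)) * phiD (zeta2 σ Kp rR t S)
      = S * Real.exp ((rR - r) * t) * phiD (zeta1 σ Kp rR t S) := by
    rw [show ((rR - r) * t) = -(r - rR) * t by ring, show -(r * t) = -r * t by ring]
    exact hid
  rw [phiD_alpha hα, phiD_alpha hα]
  rcases hα with rfl | rfl <;> field_simp <;> linarith [hid', (by simpa only [neg_mul] using hid : Kp * Real.exp (-(r * t)) * phiD (zeta2 σ Kp rR t S) = S * Real.exp (-((r - rR) * t)) * phiD (zeta1 σ Kp rR t S))]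


lemma hasDerivAt_BS_S2 (σ Kp r rR α t S : ℝ) (hα : α = 1 ∨ α = -1)
    (hKp : 0 < Kp) (hS : 0 < S) :
    HasDerivAt (fun s => α * Real.exp (-(r - rR) * t) * Phi (α * zeta1 σ Kp rR t s))
      (Real.exp (-(r - rR) * t) * phiD (zeta1 σ Kp rR t S) * (S⁻¹ / (σ * Real.sqrt t))) S := by
  have hP1 : HasDerivAt (fun s => Phi (α * zeta1 σ Kp rR t s))
      (phiD (α * zeta1 σ Kp rR t S) * (α * (S⁻¹ / (σ * Real.sqrt t)))) S :=
    (hasDerivAt_Phi _).comp S ((hasDerivAt_zeta1_S σ Kp rR t S hKp hS).const_mul α)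
  have h := hP1.const_mul (α * Real.exp (-(r - rR) * t))
  refine h.congr_deriv (Eq.symm ?_)
  rw [phiD_alpha hα]
  rcases hα with rfl | rfl <;> ring

lemma hasDerivAt_zeta1_t (σ Kp rR t S : ℝ) (hσ : 0 < σ) (ht : 0 < t) :
    HasDerivAt (fun τ => zeta1 σ Kp rR τ S)
      ((rR + σ ^ 2 / 2) / (σ * Real.sqrt t)
        - zeta1 σ Kp rR t S / (2 * (Real.sqrt t * Real.sqrt t))) t := by
  have hst : 0 < Real.sqrt t := Real.sqrt_pos.mpr ht
  have hq : σ * Real.sqrt t ≠ 0 := by positivity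
  have h1 : HasDerivAt (fun τ : ℝ => Real.log (S / Kp) + (rR + σ ^ 2 / 2) * τ)
      (rR + σ ^ 2 / 2) t := by
    simpa using ((hasDerivAt_id t).const_mul (rR + σ ^ 2 / 2)).const_add (Real.log (S / Kp))
  have h2 : HasDerivAt (fun τ : ℝ => σ * Real.sqrt τ) (σ * (1 / (2 * Real.sqrt t))) t :=
    (Real.hasDerivAt_sqrt ht.ne').const_mul σ
  have h3 := h1.div h2 hq
  refine h3.congr_deriv (Eq.symm ?_)
  rw [zeta1]
  set u := Real.sqrt t with hu
  have hu0 : 0 < u := hst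
  have hu2 : t = u ^ 2 := by rw [hu]; exact (Real.sq_sqrt ht.le).symm
  rw [hu2]
  field_simp

lemma hasDerivAt_zeta2_t (σ Kp rR t S : ℝ) (hσ : 0 < σ) (ht : 0 < t) :
    HasDerivAt (fun τ => zeta2 σ Kp rR τ S)
      ((rR + σ ^ 2 / 2) / (σ * Real.sqrt t)
        - zeta1 σ Kp rR t S / (2 * (Real.sqrt t * Real.sqrt t))
        - σ * (1 / (2 * Real.sqrt t))) t :=
  (hasDerivAt_zeta1_t σ Kp rR t S hσ ht).sub ((Real.hasDerivAt_sqrt ht.ne').const_mul σ)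

lemma hasDerivAt_BS_t (σ Kp r rR α t S : ℝ) (hα : α = 1 ∨ α = -1)
    (hσ : 0 < σ) (hKp : 0 < Kp) (ht : 0 < t) (hS : 0 < S) :
    HasDerivAt (fun τ => BS σ Kp r rR α τ S)
      (-(r - rR) * (α * S * Real.exp (-(r - rR) * t) * Phi (α * zeta1 σ Kp rR t S))
        + r * (α * Kp * Real.exp (-r * t) * Phi (α * zeta2 σ Kp rR t S))
        + S * Real.exp (-(r - rR) * t) * phiD (zeta1 σ Kp rR t S)
          * (σ * (1 / (2 * Real.sqrt t)))) t := by
  have hst : 0 < Real.sqrt t := Real.sqrt_pos.mpr ht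
  have hE1 : HasDerivAt (fun τ : ℝ => Real.exp (-(r - rR) * τ))
      (-(r - rR) * Real.exp (-(r - rR) * t)) t := by
    have h := ((hasDerivAt_id t).const_mul (-(r - rR))).exp
    simpa [mul_comm] using h
  have hE2 : HasDerivAt (fun τ : ℝ => Real.exp (-r * τ)) (-r * Real.exp (-r * t)) t := by
    have h := ((hasDerivAt_id t).const_mul (-r)).exp
    simpa [mul_comm] using h
  have hP1 : HasDerivAt (fun τ => Phi (α * zeta1 σ Kp rR τ S))
      (phiD (α * zeta1 σ Kp rR t S) * (α * ((rR + σ ^ 2 / 2) / (σ * Real.sqrt t)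
        - zeta1 σ Kp rR t S / (2 * (Real.sqrt t * Real.sqrt t))))) t :=
    (hasDerivAt_Phi _).comp t ((hasDerivAt_zeta1_t σ Kp rR t S hσ ht).const_mul α)
  have hP2 : HasDerivAt (fun τ => Phi (α * zeta2 σ Kp rR τ S))
      (phiD (α * zeta2 σ Kp rR t S) * (α * ((rR + σ ^ 2 / 2) / (σ * Real.sqrt t)
        - zeta1 σ Kp rR t S / (2 * (Real.sqrt t * Real.sqrt t))
        - σ * (1 / (2 * Real.sqrt t))))) t :=
    (hasDerivAt_Phi _).comp t ((hasDerivAt_zeta2_t σ Kp rR t S hσ ht).const_mul α)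
  have h1 := (hE1.const_mul (α * S)).mul hP1
  have h2 := (hE2.const_mul (α * Kp)).mul hP2
  have h3 := h1.sub h2
  have hBSfun : (fun τ => BS σ Kp r rR α τ S)
      = fun τ => α * S * Real.exp (-(r - rR) * τ) * Phi (α * zeta1 σ Kp rR τ S)
        - α * Kp * Real.exp (-r * τ) * Phi (α * zeta2 σ Kp rR τ S) := by
    funext τ; rw [BS]
  rw [hBSfun]
  refine h3.congr_deriv (Eq.symm ?_)
  have hid := bs_identity σ Kp r rR t S hσ ht hS hKp
  have hKE : Kp * Real.exp (-r * t) ≠ 0 := by positivity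
  have hD2 : phiD (zeta2 σ Kp rR t S)
      = S * Real.exp (-(r - rR) * t) * phiD (zeta1 σ Kp rR t S)
        / (Kp * Real.exp (-r * t)) := by
    rw [eq_div_iff hKE]
    linear_combination hid
  rw [phiD_alpha hα, phiD_alpha hα, hD2]
  rcases hα with rfl | rfl <;> field_simp <;> ring

lemma Phi_exp_mono : Monotone (fun x : ℝ => Phi x * Real.exp (x ^ 2 / 2)) := by
  have hd : ∀ x : ℝ, HasDerivAt (fun x : ℝ => Phi x * Real.exp (x ^ 2 / 2))
      ((phiD x + x * Phi x) * Real.exp (x ^ 2 / 2)) x := by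
    intro x
    have h1 : HasDerivAt (fun x : ℝ => x ^ 2 / 2) x x := by
      have := (hasDerivAt_pow 2 x).div_const 2
      simpa using this
    have h2 := h1.exp
    have h3 := (hasDerivAt_Phi x).mul h2
    refine h3.congr_deriv (Eq.symm ?_)
    ring
  apply monotone_of_deriv_nonneg
  · exact fun x => (hd x).differentiableAt
  · intro x
    rw [(hd x).deriv]
    exact mul_nonneg (phiD_add_mul_Phi_nonneg x) (Real.exp_pos _).le

lemma BS_nonneg (σ Kp r rR α t S : ℝ) (hα : α = 1 ∨ α = -1)
    (hσ : 0 < σ) (hKp : 0 < Kp) (ht : 0 < t) (hS : 0 < S) :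
    0 ≤ BS σ Kp r rR α t S := by
  have hst : 0 < Real.sqrt t := Real.sqrt_pos.mpr ht
  set Z₁ := zeta1 σ Kp rR t S with hZ1
  set Z₂ := zeta2 σ Kp rR t S with hZ2
  have hZle : Z₂ ≤ Z₁ := by
    rw [hZ2, zeta2, ← hZ1]
    nlinarith [hst, hσ]
  have hA : (0:ℝ) < Real.exp (Z₁ ^ 2 / 2) := Real.exp_pos _
  have hB : (0:ℝ) < Real.exp (Z₂ ^ 2 / 2) := Real.exp_pos _
  have key : Kp * Real.exp (-r * t) * Real.exp (Z₁ ^ 2 / 2)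
      = S * Real.exp (-(r - rR) * t) * Real.exp (Z₂ ^ 2 / 2) := by
    have h1 : Z₁ ^ 2 / 2 = Z₂ ^ 2 / 2 + (Real.log (S / Kp) + rR * t) := by
      linarith [zeta_sq_diff σ Kp rR t S hσ ht]
    rw [h1, Real.exp_add, Real.exp_add, Real.exp_log (div_pos hS hKp)]
    rw [show -(r - rR) * t = -r * t + rR * t by ring, Real.exp_add]
    field_simp
  rcases hα with rfl | rfl
  · have m := Phi_exp_mono hZle
    simp only at m
    rw [BS, ← hZ1, ← hZ2]
    simp only [one_mul]
    have hKE : (0:ℝ) ≤ Kp * Real.exp (-r * t) := by positivity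
    have h6 : (Kp * Real.exp (-r * t) * Phi Z₂) * Real.exp (Z₂ ^ 2 / 2)
        ≤ (S * Real.exp (-(r - rR) * t) * Phi Z₁) * Real.exp (Z₂ ^ 2 / 2) := by
      calc (Kp * Real.exp (-r * t) * Phi Z₂) * Real.exp (Z₂ ^ 2 / 2)
          = Kp * Real.exp (-r * t) * (Phi Z₂ * Real.exp (Z₂ ^ 2 / 2)) := by ring
        _ ≤ Kp * Real.exp (-r * t) * (Phi Z₁ * Real.exp (Z₁ ^ 2 / 2)) :=
            mul_le_mul_of_nonneg_left m hKE
        _ = (Kp * Real.exp (-r * t) * Real.exp (Z₁ ^ 2 / 2)) * Phi Z₁ := by ring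
        _ = (S * Real.exp (-(r - rR) * t) * Real.exp (Z₂ ^ 2 / 2)) * Phi Z₁ := by rw [key]
        _ = (S * Real.exp (-(r - rR) * t) * Phi Z₁) * Real.exp (Z₂ ^ 2 / 2) := by ring
    have h7 := le_of_mul_le_mul_right h6 hB
    linarith
  · have m := Phi_exp_mono (neg_le_neg hZle)
    simp only [neg_sq] at m
    rw [BS, ← hZ1, ← hZ2]
    simp only [show ((-1:ℝ)) * Z₁ = -Z₁ from by ring, show ((-1:ℝ)) * Z₂ = -Z₂ from by ring]
    have hSE : (0:ℝ) ≤ S * Real.exp (-(r - rR) * t) := by positivity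
    have h6 : (S * Real.exp (-(r - rR) * t) * Phi (-Z₁)) * Real.exp (Z₁ ^ 2 / 2)
        ≤ (Kp * Real.exp (-r * t) * Phi (-Z₂)) * Real.exp (Z₁ ^ 2 / 2) := by
      calc (S * Real.exp (-(r - rR) * t) * Phi (-Z₁)) * Real.exp (Z₁ ^ 2 / 2)
          = S * Real.exp (-(r - rR) * t) * (Phi (-Z₁) * Real.exp (Z₁ ^ 2 / 2)) := by ring
        _ ≤ S * Real.exp (-(r - rR) * t) * (Phi (-Z₂) * Real.exp (Z₂ ^ 2 / 2)) :=
            mul_le_mul_of_nonneg_left m hSE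
        _ = (S * Real.exp (-(r - rR) * t) * Real.exp (Z₂ ^ 2 / 2)) * Phi (-Z₂) := by ring
        _ = (Kp * Real.exp (-r * t) * Real.exp (Z₁ ^ 2 / 2)) * Phi (-Z₂) := by rw [key]
        _ = (Kp * Real.exp (-r * t) * Phi (-Z₂)) * Real.exp (Z₁ ^ 2 / 2) := by ring
    have h7 := le_of_mul_le_mul_right h6 hA
    linarith


lemma sqrt_tendsto_zero : Tendsto (fun t : ℝ => Real.sqrt t) (𝓝[>] 0) (𝓝[>] 0) := by
  rw [tendsto_nhdsWithin_iff]
  constructor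
  · have h := (Real.continuous_sqrt.tendsto 0).mono_left (nhdsWithin_le_nhds (s := Set.Ioi 0))
    simpa using h
  · filter_upwards [self_mem_nhdsWithin] with t ht
    exact Real.sqrt_pos.mpr ht

lemma inv_ssqrt_tendsto (σ : ℝ) (hσ : 0 < σ) :
    Tendsto (fun t : ℝ => (σ * Real.sqrt t)⁻¹) (𝓝[>] 0) atTop := by
  apply Filter.Tendsto.inv_tendsto_nhdsGT_zero
  rw [tendsto_nhdsWithin_iff]
  constructor
  · have h := (sqrt_tendsto_zero.mono_right nhdsWithin_le_nhds).const_mul σ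
    simpa using h
  · filter_upwards [self_mem_nhdsWithin] with t ht
    have h2 : 0 < Real.sqrt t := Real.sqrt_pos.mpr ht
    exact Set.mem_Ioi.mpr (by positivity)

lemma zeta1_eq_mul (σ Kp rR S : ℝ) (t : ℝ) :
    zeta1 σ Kp rR t S = (Real.log (S / Kp) + (rR + σ ^ 2 / 2) * t) * (σ * Real.sqrt t)⁻¹ := by
  rw [zeta1, div_eq_mul_inv]

lemma zeta1_tendsto_atTop (σ Kp rR S : ℝ) (hσ : 0 < σ) (hL : 0 < Real.log (S / Kp)) :
    Tendsto (fun t => zeta1 σ Kp rR t S) (𝓝[>] 0) atTop := by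
  simp only [zeta1_eq_mul]
  apply Filter.Tendsto.pos_mul_atTop hL _ (inv_ssqrt_tendsto σ hσ)
  have h : Tendsto (fun t : ℝ => Real.log (S / Kp) + (rR + σ ^ 2 / 2) * t) (𝓝 0)
      (𝓝 (Real.log (S / Kp))) := by
    have hc : Continuous (fun t : ℝ => Real.log (S / Kp) + (rR + σ ^ 2 / 2) * t) := by
      continuity
    simpa using hc.tendsto 0
  exact h.mono_left nhdsWithin_le_nhds

lemma zeta1_tendsto_atBot (σ Kp rR S : ℝ) (hσ : 0 < σ) (hL : Real.log (S / Kp) < 0) :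
    Tendsto (fun t => zeta1 σ Kp rR t S) (𝓝[>] 0) atBot := by
  simp only [zeta1_eq_mul]
  apply Filter.Tendsto.neg_mul_atTop hL _ (inv_ssqrt_tendsto σ hσ)
  have h : Tendsto (fun t : ℝ => Real.log (S / Kp) + (rR + σ ^ 2 / 2) * t) (𝓝 0)
      (𝓝 (Real.log (S / Kp))) := by
    have hc : Continuous (fun t : ℝ => Real.log (S / Kp) + (rR + σ ^ 2 / 2) * t) := by
      continuity
    simpa using hc.tendsto 0
  exact h.mono_left nhdsWithin_le_nhds

lemma ssqrt_tendsto_zero' (σ : ℝ) :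
    Tendsto (fun t : ℝ => σ * Real.sqrt t) (𝓝[>] 0) (𝓝 0) := by
  have h := ((sqrt_tendsto_zero.mono_right nhdsWithin_le_nhds).const_mul σ)
  simpa using h

lemma zeta2_tendsto_atTop (σ Kp rR S : ℝ) (hσ : 0 < σ) (hL : 0 < Real.log (S / Kp)) :
    Tendsto (fun t => zeta2 σ Kp rR t S) (𝓝[>] 0) atTop := by
  simp only [zeta2, sub_eq_add_neg]
  exact (zeta1_tendsto_atTop σ Kp rR S hσ hL).atTop_add ((ssqrt_tendsto_zero' σ).neg.congr (fun t => rfl))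

lemma zeta2_tendsto_atBot (σ Kp rR S : ℝ) (hσ : 0 < σ) (hL : Real.log (S / Kp) < 0) :
    Tendsto (fun t => zeta2 σ Kp rR t S) (𝓝[>] 0) atBot := by
  simp only [zeta2, sub_eq_add_neg]
  exact (zeta1_tendsto_atBot σ Kp rR S hσ hL).atBot_add ((ssqrt_tendsto_zero' σ).neg.congr (fun t => rfl))

lemma zeta1_tendsto_zero (σ Kp rR S : ℝ) (hσ : 0 < σ) (hL : Real.log (S / Kp) = 0) :
    Tendsto (fun t => zeta1 σ Kp rR t S) (𝓝[>] 0) (𝓝 0) := by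
  have heq : ∀ᶠ t in 𝓝[>] (0:ℝ), ((rR + σ ^ 2 / 2) / σ) * Real.sqrt t = zeta1 σ Kp rR t S := by
    filter_upwards [self_mem_nhdsWithin] with t ht
    have ht0 : (0:ℝ) < t := ht
    have hst : 0 < Real.sqrt t := Real.sqrt_pos.mpr ht0
    have hsq : Real.sqrt t * Real.sqrt t = t := Real.mul_self_sqrt ht0.le
    rw [zeta1, hL]
    field_simp
    linear_combination (rR * 2 + σ ^ 2) * hsq
  apply Tendsto.congr' heq
  have h := ((sqrt_tendsto_zero.mono_right nhdsWithin_le_nhds).const_mul ((rR + σ ^ 2 / 2) / σ))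
  simpa using h

lemma exp_lin_tendsto_one (c : ℝ) :
    Tendsto (fun t : ℝ => Real.exp (c * t)) (𝓝[>] 0) (𝓝 1) := by
  have hc : Continuous (fun t : ℝ => Real.exp (c * t)) := by continuity
  have h := hc.tendsto 0
  simp only [mul_zero, Real.exp_zero] at h
  exact h.mono_left nhdsWithin_le_nhds

lemma BS_limit (σ Kp r rR α S : ℝ) (hα : α = 1 ∨ α = -1) (hσ : 0 < σ)
    (hKp : 0 < Kp) (hS : 0 < S) :
    Tendsto (fun t => BS σ Kp r rR α t S) (𝓝[>] 0) (𝓝 (max (α * (S - Kp)) 0)) := by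
  have hE1 : Tendsto (fun t : ℝ => Real.exp (-(r - rR) * t)) (𝓝[>] 0) (𝓝 1) :=
    exp_lin_tendsto_one _
  have hE2 : Tendsto (fun t : ℝ => Real.exp (-r * t)) (𝓝[>] 0) (𝓝 1) :=
    exp_lin_tendsto_one _
  have hBS : ∀ P₁ P₂ : ℝ, Tendsto (fun t => Phi (α * zeta1 σ Kp rR t S)) (𝓝[>] 0) (𝓝 P₁) →
      Tendsto (fun t => Phi (α * zeta2 σ Kp rR t S)) (𝓝[>] 0) (𝓝 P₂) →
      Tendsto (fun t => BS σ Kp r rR α t S) (𝓝[>] 0)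
        (𝓝 (α * S * 1 * P₁ - α * Kp * 1 * P₂)) := by
    intro P₁ P₂ h₁ h₂
    exact (((hE1.const_mul (α * S)).mul h₁).sub ((hE2.const_mul (α * Kp)).mul h₂))
  rcases lt_trichotomy (Real.log (S / Kp)) 0 with hL | hL | hL
  · -- S < Kp
    have hz1 := zeta1_tendsto_atBot σ Kp rR S hσ hL
    have hz2 := zeta2_tendsto_atBot σ Kp rR S hσ hL
    have hSK : S < Kp := by
      by_contra h
      push_neg at h
      have : 0 ≤ Real.log (S / Kp) := Real.log_nonneg ((le_div_iff₀ hKp).mpr (by linarith))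
      linarith
    rcases hα with rfl | rfl
    · have h₁ : Tendsto (fun t => Phi (1 * zeta1 σ Kp rR t S)) (𝓝[>] 0) (𝓝 0) := by
        simp only [one_mul]; exact Phi_tendsto_atBot.comp hz1
      have h₂ : Tendsto (fun t => Phi (1 * zeta2 σ Kp rR t S)) (𝓝[>] 0) (𝓝 0) := by
        simp only [one_mul]; exact Phi_tendsto_atBot.comp hz2
      have h := hBS 0 0 h₁ h₂
      have hmax : max ((1:ℝ) * (S - Kp)) 0 = 1 * S * 1 * 0 - 1 * Kp * 1 * 0 := by
        rw [max_eq_right (by nlinarith)]; ring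
      rw [hmax]; exact h
    · have h₁ : Tendsto (fun t => Phi (-1 * zeta1 σ Kp rR t S)) (𝓝[>] 0) (𝓝 1) := by
        have := Phi_tendsto_atTop.comp (tendsto_neg_atBot_atTop.comp hz1)
        simpa [Function.comp_def] using this
      have h₂ : Tendsto (fun t => Phi (-1 * zeta2 σ Kp rR t S)) (𝓝[>] 0) (𝓝 1) := by
        have := Phi_tendsto_atTop.comp (tendsto_neg_atBot_atTop.comp hz2)
        simpa [Function.comp_def] using this
      have h := hBS 1 1 h₁ h₂
      have hmax : max ((-1:ℝ) * (S - Kp)) 0 = -1 * S * 1 * 1 - -1 * Kp * 1 * 1 := by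
        rw [max_eq_left (by nlinarith)]; ring
      rw [hmax]; exact h
  · -- S = Kp
    have hz1 := zeta1_tendsto_zero σ Kp rR S hσ hL
    have hz2 : Tendsto (fun t => zeta2 σ Kp rR t S) (𝓝[>] 0) (𝓝 0) := by
      have h := hz1.sub (ssqrt_tendsto_zero' σ)
      simpa [zeta2] using h
    have hSK : S = Kp := by
      have h := Real.log_eq_zero.mp hL
      rcases h with h | h | h
      · exact absurd h (div_ne_zero hS.ne' hKp.ne')
      · field_simp at h; linarith
      · exfalso; have : (0:ℝ) < S / Kp := div_pos hS hKp; linarith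
    have h₁ : Tendsto (fun t => Phi (α * zeta1 σ Kp rR t S)) (𝓝[>] 0) (𝓝 (Phi 0)) := by
      have := (continuous_Phi.tendsto (α * 0)).comp (hz1.const_mul α)
      simpa [Function.comp_def] using this
    have h₂ : Tendsto (fun t => Phi (α * zeta2 σ Kp rR t S)) (𝓝[>] 0) (𝓝 (Phi 0)) := by
      have := (continuous_Phi.tendsto (α * 0)).comp (hz2.const_mul α)
      simpa [Function.comp_def] using this
    have h := hBS _ _ h₁ h₂
    have hmax : max (α * (S - Kp)) 0
        = α * S * 1 * Phi 0 - α * Kp * 1 * Phi 0 := by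
      rw [hSK]; simp
    rw [hmax]; exact h
  · -- S > Kp
    have hz1 := zeta1_tendsto_atTop σ Kp rR S hσ hL
    have hz2 := zeta2_tendsto_atTop σ Kp rR S hσ hL
    have hSK : Kp < S := by
      by_contra h
      push_neg at h
      have : Real.log (S / Kp) ≤ 0 :=
        Real.log_nonpos (by positivity) ((div_le_one hKp).mpr h)
      linarith
    rcases hα with rfl | rfl
    · have h₁ : Tendsto (fun t => Phi (1 * zeta1 σ Kp rR t S)) (𝓝[>] 0) (𝓝 1) := by
        simp only [one_mul]; exact Phi_tendsto_atTop.comp hz1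
      have h₂ : Tendsto (fun t => Phi (1 * zeta2 σ Kp rR t S)) (𝓝[>] 0) (𝓝 1) := by
        simp only [one_mul]; exact Phi_tendsto_atTop.comp hz2
      have h := hBS 1 1 h₁ h₂
      have hmax : max ((1:ℝ) * (S - Kp)) 0 = 1 * S * 1 * 1 - 1 * Kp * 1 * 1 := by
        rw [max_eq_left (by nlinarith)]; ring
      rw [hmax]; exact h
    · have h₁ : Tendsto (fun t => Phi (-1 * zeta1 σ Kp rR t S)) (𝓝[>] 0) (𝓝 0) := by
        have := Phi_tendsto_atBot.comp (tendsto_neg_atTop_atBot.comp hz1)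
        simpa [Function.comp_def] using this
      have h₂ : Tendsto (fun t => Phi (-1 * zeta2 σ Kp rR t S)) (𝓝[>] 0) (𝓝 0) := by
        have := Phi_tendsto_atBot.comp (tendsto_neg_atTop_atBot.comp hz2)
        simpa [Function.comp_def] using this
      have h := hBS 0 0 h₁ h₂
      have hmax : max ((-1:ℝ) * (S - Kp)) 0 = -1 * S * 1 * 0 - -1 * Kp * 1 * 0 := by
        rw [max_eq_right (by nlinarith)]; ring
      rw [hmax]; exact h

/-- The XVA source term `f(v) = λ_B(1−R_B) min{v,0} + (λ_C(1−R_C)+s_F) max{v,0}`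
with funding spread `s_F = (1−R_B)λ_B`. -/
noncomputable def fXVA (lB lC RB RC : ℝ) (v : ℝ) : ℝ :=
  lB * (1 - RB) * min v 0 + (lC * (1 - RC) + (1 - RB) * lB) * max v 0

/-- The lower-boundary (`S₁ = 0`) problem of the two-dimensional risky
Black–Scholes arithmetic-average basket option is solved by
`W(t,S₂) = (1/2) 𝓑𝓢_{2K}(t,S₂) e^{−(λ_B(1−R_B)+λ_C(1−R_C))t}`, where `𝓑𝓢_{2K}`
is the Black–Scholes formula with strike `2K`, volatility `σ₂` and repo rate
`r_{R₂}`; moreover `W(t,S₂) → max{α(S₂/2 − K), 0}` as `t → 0⁺`. -/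
theorem basket_lower_boundary_solution
    (σ₂ K r rR₂ T α lB lC RB RC : ℝ)
    (hσ₂ : 0 < σ₂) (hK : 0 < K) (hT : 0 < T) (hα : α = 1 ∨ α = -1)
    (hlB : 0 ≤ lB) (hlC : 0 ≤ lC)
    (hRB : RB ∈ Set.Icc (0 : ℝ) 1) (hRC : RC ∈ Set.Icc (0 : ℝ) 1)
    (W : ℝ → ℝ → ℝ)
    (hW : ∀ t S₂, W t S₂ = 1 / 2 * BS σ₂ (2 * K) r rR₂ α t S₂
      * Real.exp (-(lB * (1 - RB) + lC * (1 - RC)) * t)) :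
    (∀ t ∈ Set.Ioo 0 T, ∀ S₂ ∈ Set.Ioi (0 : ℝ),
      deriv (fun τ => W τ S₂) t
        - σ₂ ^ 2 * S₂ ^ 2 / 2 * deriv (deriv (fun s => W t s)) S₂
        - rR₂ * S₂ * deriv (fun s => W t s) S₂
        + r * W t S₂ + fXVA lB lC RB RC (W t S₂) = 0) ∧
    (∀ S₂ > (0 : ℝ),
      Filter.Tendsto (fun t => W t S₂) (nhdsWithin 0 (Set.Ioi 0))
        (nhds (max (α * (S₂ / 2 - K)) 0))) := by
  have hKp : (0:ℝ) < 2 * K := by positivity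
  constructor
  · rintro t ⟨ht0, htT⟩ S₂ hS₂
    have hS : (0:ℝ) < S₂ := hS₂
    have hst : 0 < Real.sqrt t := Real.sqrt_pos.mpr ht0
    -- time derivative
    have hexpt : HasDerivAt (fun τ : ℝ => Real.exp (-(lB * (1 - RB) + lC * (1 - RC)) * τ))
        (-(lB * (1 - RB) + lC * (1 - RC))
          * Real.exp (-(lB * (1 - RB) + lC * (1 - RC)) * t)) t := by
      have h := ((hasDerivAt_id t).const_mul (-(lB * (1 - RB) + lC * (1 - RC)))).exp
      simpa [mul_comm] using h
    have hBt := hasDerivAt_BS_t σ₂ (2 * K) r rR₂ α t S₂ hα hσ₂ hKp ht0 hS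
    have hDt : HasDerivAt (fun τ => W τ S₂)
        (1 / 2 * (-(r - rR₂) * (α * S₂ * Real.exp (-(r - rR₂) * t)
            * Phi (α * zeta1 σ₂ (2 * K) rR₂ t S₂))
          + r * (α * (2 * K) * Real.exp (-r * t) * Phi (α * zeta2 σ₂ (2 * K) rR₂ t S₂))
          + S₂ * Real.exp (-(r - rR₂) * t) * phiD (zeta1 σ₂ (2 * K) rR₂ t S₂)
            * (σ₂ * (1 / (2 * Real.sqrt t))))
          * Real.exp (-(lB * (1 - RB) + lC * (1 - RC)) * t)
        + (1 / 2 * BS σ₂ (2 * K) r rR₂ α t S₂)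
          * (-(lB * (1 - RB) + lC * (1 - RC))
            * Real.exp (-(lB * (1 - RB) + lC * (1 - RC)) * t))) t := by
      have heq : (fun τ => W τ S₂) = fun τ => (1 / 2 * BS σ₂ (2 * K) r rR₂ α τ S₂)
          * Real.exp (-(lB * (1 - RB) + lC * (1 - RC)) * τ) := funext fun τ => hW τ S₂
      rw [heq]
      exact (hBt.const_mul (1 / 2)).mul hexpt
    -- first space derivative
    have hWs : (fun s => W t s) = fun s => (1 / 2 * BS σ₂ (2 * K) r rR₂ α t s)
        * Real.exp (-(lB * (1 - RB) + lC * (1 - RC)) * t) := funext fun s => hW t s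
    have hDs : HasDerivAt (fun s => W t s)
        (1 / 2 * (α * Real.exp (-(r - rR₂) * t) * Phi (α * zeta1 σ₂ (2 * K) rR₂ t S₂))
          * Real.exp (-(lB * (1 - RB) + lC * (1 - RC)) * t)) S₂ := by
      rw [hWs]
      exact ((hasDerivAt_BS_S σ₂ (2 * K) r rR₂ α t S₂ hα hσ₂ hKp ht0 hS).const_mul
        (1 / 2)).mul_const _
    -- second space derivative
    set g₁ : ℝ → ℝ := fun s => 1 / 2 * (α * Real.exp (-(r - rR₂) * t)
        * Phi (α * zeta1 σ₂ (2 * K) rR₂ t s))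
        * Real.exp (-(lB * (1 - RB) + lC * (1 - RC)) * t) with hg₁def
    have hev : deriv (fun s => W t s) =ᶠ[nhds S₂] g₁ := by
      filter_upwards [eventually_gt_nhds hS] with s hs
      have hds : HasDerivAt (fun s => W t s) (g₁ s) s := by
        rw [hWs, hg₁def]
        exact ((hasDerivAt_BS_S σ₂ (2 * K) r rR₂ α t s hα hσ₂ hKp ht0 hs).const_mul
          (1 / 2)).mul_const _
      exact hds.deriv
    have hg1 : HasDerivAt g₁
        (1 / 2 * (Real.exp (-(r - rR₂) * t) * phiD (zeta1 σ₂ (2 * K) rR₂ t S₂)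
          * (S₂⁻¹ / (σ₂ * Real.sqrt t)))
          * Real.exp (-(lB * (1 - RB) + lC * (1 - RC)) * t)) S₂ := by
      rw [hg₁def]
      exact ((hasDerivAt_BS_S2 σ₂ (2 * K) r rR₂ α t S₂ hα hKp hS).const_mul
        (1 / 2)).mul_const _
    have hdd : deriv (deriv (fun s => W t s)) S₂
        = 1 / 2 * (Real.exp (-(r - rR₂) * t) * phiD (zeta1 σ₂ (2 * K) rR₂ t S₂)
          * (S₂⁻¹ / (σ₂ * Real.sqrt t)))
          * Real.exp (-(lB * (1 - RB) + lC * (1 - RC)) * t) := by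
      rw [hev.deriv_eq, hg1.deriv]
    -- nonnegativity and fXVA
    have hW0 : 0 ≤ W t S₂ := by
      rw [hW t S₂]
      have hB0 := BS_nonneg σ₂ (2 * K) r rR₂ α t S₂ hα hσ₂ hKp ht0 hS
      positivity
    have hfx : fXVA lB lC RB RC (W t S₂)
        = (lC * (1 - RC) + (1 - RB) * lB) * W t S₂ := by
      rw [fXVA, min_eq_right hW0, max_eq_left hW0]
      ring
    rw [hDt.deriv, hdd, hDs.deriv, hfx, hW t S₂, BS]
    rcases hα with rfl | rfl <;> field_simp <;> ring
  · intro S₂ hS₂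
    have hlim := BS_limit σ₂ (2 * K) r rR₂ α S₂ hα hσ₂ hKp hS₂
    have hexp : Tendsto (fun t => Real.exp (-(lB * (1 - RB) + lC * (1 - RC)) * t))
        (𝓝[>] 0) (𝓝 1) := exp_lin_tendsto_one _
    have h := (hlim.const_mul (1 / 2 : ℝ)).mul hexp
    have heq : (fun t => W t S₂) = fun t => (1 / 2 * BS σ₂ (2 * K) r rR₂ α t S₂)
        * Real.exp (-(lB * (1 - RB) + lC * (1 - RC)) * t) := funext fun t => hW t S₂
    rw [heq]
    have hval : max (α * (S₂ / 2 - K)) 0 = 1 / 2 * max (α * (S₂ - 2 * K)) 0 * 1 := by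
      rw [mul_one, show α * (S₂ / 2 - K) = (α * (S₂ - 2 * K)) / 2 by ring,
        show (0:ℝ) = 0 / 2 by norm_num, max_div_div_right (by norm_num : (0:ℝ) ≤ 2)]
      ring
    rw [hval]
    exact h
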